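/- arXiv:1301.0516 — 4 statements merged into one kernel-verified Lean document; each statement's English description precedes it below -/
import Mathlib

section
/- For n ≥ 2, the set of supports of n-concatenations equals the set of supports of n-op-concatenations; more precisely, for any n-concatenation (p_1, …, p_{n-1}) of relations along a directed path T there exists a unique n-op-concatenation (q^1, …, q^{n-1}) in T with the same support path, and conversely. -/
/-!
Common framework for formalizing "Hochschild cohomology of triangular string
algebras and its ring structure" (Redondo–Román).

* Interval combinatorics model of Bardzell's `n`-concatenations along a directed
  path (a directed path is modelled by the line `ℕ`, a subpath by an interval,
  and a relation by the interval it occupies).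
* A combinatorial model of a bound quiver `(Q, I)` with `I` a monomial ideal
  generated by a reduced set `R` of paths: paths are nonempty composable lists
  of arrows, `AP_n` is the set of supports of `n`-concatenations, `𝒫` is the
  basis of `A = kQ/I` given by the paths not in `I`.
* The Hochschild complex `Hom_{E-E}(kAP_n, A) ≅ k(AP_n ∥ 𝒫)` of a (triangular)
  monomial algebra obtained from Bardzell's minimal resolution, with its
  differentials `F_n` realized as explicit matrices, and the Hochschild
  cohomology `HH^n(A)` defined as the cohomology of this complex (for monomial
  algebras this complex computes Hochschild cohomology, by Bardzell's theorem).
-/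

attribute [local instance] Classical.propDecidable

noncomputable section

namespace Paper

/-! ### Interval model of concatenations along a directed path -/

/-- An interval `(s, t)` on the line `ℕ`: the model of a subpath of a fixed
directed path `T`, going from vertex `s` to vertex `t`. -/
abbrev Iv := ℕ × ℕ

/-- `R` is a reduced set of relations along a directed path: every relation is a
path of length at least two, and no relation divides another one. -/
structure RelSet (R : Set Iv) : Prop where
  len : ∀ r ∈ R, r.1 + 2 ≤ r.2
  nodiv : ∀ r ∈ R, ∀ r' ∈ R, r.1 ≤ r'.1 → r'.2 ≤ r.2 → r = r'

/-- The window from which the `(i+1)`-st relation (0-based index `i ≥ 1`) of a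
concatenation is chosen: `L_1 = {p ∈ R : s(p_1) < s(p) < t(p_1)}` and
`L_{j+1} = {p ∈ R : t(p_{j-1}) ≤ s(p) < t(p_j)}`. -/
def cWindow (R : Set Iv) (p : ℕ → Iv) (i : ℕ) : Set Iv :=
  if i = 1 then {q | q ∈ R ∧ (p 0).1 < q.1 ∧ q.1 < (p 0).2}
  else {q | q ∈ R ∧ (p (i - 2)).2 ≤ q.1 ∧ q.1 < (p (i - 1)).2}

/-- `IsConcat R k p` : the relations `p 0, p 1, …, p (k-1)` form a
`(k+1)`-concatenation `(p_1, …, p_k)` in Bardzell's sense: each `p i` (for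
`1 ≤ i < k`) is a relation of the corresponding window with minimal source. -/
def IsConcat (R : Set Iv) (k : ℕ) (p : ℕ → Iv) : Prop :=
  p 0 ∈ R ∧ ∀ i, 1 ≤ i → i < k →
    (p i ∈ cWindow R p i ∧ ∀ q ∈ cWindow R p i, (p i).1 ≤ q.1)

/-- The dual window: `L_1^{op} = {q ∈ R : s(q_1) < t(q) < t(q_1)}` and
`L_{j+1}^{op} = {q ∈ R : s(q_j) < t(q) ≤ s(q_{j-1})}`. -/
def oWindow (R : Set Iv) (q : ℕ → Iv) (i : ℕ) : Set Iv :=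
  if i = 1 then {r | r ∈ R ∧ (q 0).1 < r.2 ∧ r.2 < (q 0).2}
  else {r | r ∈ R ∧ (q (i - 1)).1 < r.2 ∧ r.2 ≤ (q (i - 2)).1}

/-- `IsOpConcat R k q` : the relations `q 0, …, q (k-1)` form a
`(k+1)`-op-concatenation `(q_{k}, …, q_1)` (so `q 0 = q_k` is built first and
`q^j = q (k - j)` in the paper's upper-index notation): each `q i` (for
`1 ≤ i < k`) is a relation of the corresponding dual window with maximal
target. -/
def IsOpConcat (R : Set Iv) (k : ℕ) (q : ℕ → Iv) : Prop :=
  q 0 ∈ R ∧ ∀ i, 1 ≤ i → i < k →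
    (q i ∈ oWindow R q i ∧ ∀ r ∈ oWindow R q i, r.2 ≤ (q i).2)

/-- `IsSupport R n w` : the interval `w` is the support of an
`n`-concatenation (for `n = 0` a vertex, for `n = 1` an arrow). -/
def IsSupport (R : Set Iv) : ℕ → Iv → Prop
  | 0, w => w.2 = w.1
  | 1, w => w.2 = w.1 + 1
  | (n + 2), w => ∃ p : ℕ → Iv, IsConcat R (n + 1) p ∧ (p 0).1 = w.1 ∧ (p n).2 = w.2

/-- `IsOpSupport R n w` : the interval `w` is the support of an
`n`-op-concatenation. -/
def IsOpSupport (R : Set Iv) : ℕ → Iv → Prop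
  | 0, w => w.2 = w.1
  | 1, w => w.2 = w.1 + 1
  | (n + 2), w => ∃ q : ℕ → Iv, IsOpConcat R (n + 1) q ∧ (q n).1 = w.1 ∧ (q 0).2 = w.2

/-! ### The combinatorial model of a monomial (string) bound quiver -/

/-- A finite quiver, given by raw data. -/
structure QuivData where
  V : Type
  E : Type
  src : E → V
  tgt : E → V

variable (Q : QuivData)

/-- A (nontrivial) path in `Q`: a nonempty composable list of arrows. -/
def IsPathL (l : List Q.E) : Prop :=
  l ≠ [] ∧ l.Chain' fun a b => Q.tgt a = Q.src b

/-- The source vertex of a nonempty list of arrows (as an `Option`). -/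
def psrc (l : List Q.E) : Option Q.V := l.head?.map Q.src

/-- The target vertex of a nonempty list of arrows (as an `Option`). -/
def ptgt (l : List Q.E) : Option Q.V := l.getLast?.map Q.tgt

/-- `l` lies in the (monomial) ideal `I = ⟨R⟩`: some relation divides `l`. -/
def inI (R : Set (List Q.E)) (l : List Q.E) : Prop := ∃ r ∈ R, r <:+: l

/-- `l` belongs to the canonical basis `𝒫` of `A = kQ/I`: a nontrivial path
not in `I`.  (Trivial paths `e_x` are treated separately.) -/
def isP (R : Set (List Q.E)) (l : List Q.E) : Prop := IsPathL Q l ∧ ¬ inI Q R l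

/-- `(Q, R)` presents a **triangular string algebra**: relations are paths of
length `≥ 2`, form a reduced (minimal) generating set, the string conditions
S1), S2) hold, and `Q` has no oriented cycles. -/
structure StringData (R : Set (List Q.E)) : Prop where
  relPath : ∀ r ∈ R, IsPathL Q r ∧ 2 ≤ r.length
  relMin : ∀ r ∈ R, ∀ r' ∈ R, r' <:+: r → r' = r
  srcTwo : ∀ v : Q.V, ∀ a b c : Q.E, Q.src a = v → Q.src b = v → Q.src c = v →
    a = b ∨ a = c ∨ b = c
  tgtTwo : ∀ v : Q.V, ∀ a b c : Q.E, Q.tgt a = v → Q.tgt b = v → Q.tgt c = v →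
    a = b ∨ a = c ∨ b = c
  uniqRight : ∀ a b c : Q.E, Q.tgt a = Q.src b → Q.tgt a = Q.src c →
    [a, b] ∉ R → [a, c] ∉ R → b = c
  uniqLeft : ∀ a b c : Q.E, Q.tgt b = Q.src a → Q.tgt c = Q.src a →
    [b, a] ∉ R → [c, a] ∉ R → b = c
  triangular : ∀ l : List Q.E, IsPathL Q l → psrc Q l ≠ ptgt Q l

/-- The subpath of `l` occupying the positions `[c.1, c.2)`. -/
def slice (l : List Q.E) (c : Iv) : List Q.E := (l.drop c.1).take (c.2 - c.1)

/-- The intervals of positions of `w` occupied by relations of `R`. -/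
def relIvs (R : Set (List Q.E)) (w : List Q.E) : Set Iv :=
  {c | c.1 < c.2 ∧ c.2 ≤ w.length ∧ slice Q w c ∈ R}

/-- `w ∈ AP_n` : `w` is the support of an `n`-concatenation of relations of
`R` (for `n = 1`, an arrow; the vertices `AP_0` are treated separately). -/
def IsAP (R : Set (List Q.E)) : ℕ → List Q.E → Prop
  | 0, _ => False
  | 1, w => IsPathL Q w ∧ w.length = 1
  | (n + 2), w => IsPathL Q w ∧ IsSupport (relIvs Q R w) (n + 2) (0, w.length)

/-- `w ∈ AP_n^{op}` : `w` is the support of an `n`-op-concatenation. -/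
def IsAPop (R : Set (List Q.E)) : ℕ → List Q.E → Prop
  | 0, _ => False
  | 1, w => IsPathL Q w ∧ w.length = 1
  | (n + 2), w => IsPathL Q w ∧ IsOpSupport (relIvs Q R w) (n + 2) (0, w.length)

/-- A pair of parallel paths. -/
abbrev Pr := List Q.E × List Q.E

/-- The set `(AP_n ∥ 𝒫)` of pairs `(ρ, γ)` with `ρ ∈ AP_n`, `γ ∈ 𝒫` and
`ρ, γ` parallel; it indexes a basis of `Hom_{E-E}(kAP_n, A)`. -/
def PairSet (R : Set (List Q.E)) (n : ℕ) : Set (Pr Q) :=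
  {x | IsAP Q R n x.1 ∧ isP Q R x.2 ∧ psrc Q x.1 = psrc Q x.2 ∧ ptgt Q x.1 = ptgt Q x.2}

/-- `ρ` and `γ` have the same first arrow. -/
def sharesFirst (x : Pr Q) : Prop := x.1.head? = x.2.head?

/-- `ρ` and `γ` have the same last arrow. -/
def sharesLast (x : Pr Q) : Prop := x.1.getLast? = x.2.getLast?

/-- The class `(0,0)_n`. -/
def cls00 (R : Set (List Q.E)) (n : ℕ) : Set (Pr Q) :=
  {x ∈ PairSet Q R n | ¬ sharesFirst Q x ∧ ¬ sharesLast Q x}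

/-- The class `(1,0)_n`. -/
def cls10 (R : Set (List Q.E)) (n : ℕ) : Set (Pr Q) :=
  {x ∈ PairSet Q R n | sharesFirst Q x ∧ ¬ sharesLast Q x}

/-- The class `(0,1)_n`. -/
def cls01 (R : Set (List Q.E)) (n : ℕ) : Set (Pr Q) :=
  {x ∈ PairSet Q R n | ¬ sharesFirst Q x ∧ sharesLast Q x}

/-- The class `(1,1)_n`. -/
def cls11 (R : Set (List Q.E)) (n : ℕ) : Set (Pr Q) :=
  {x ∈ PairSet Q R n | sharesFirst Q x ∧ sharesLast Q x}

/-- `Q_1 · γ ⊆ I` (left decoration `⁻`). -/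
def leftI (R : Set (List Q.E)) (γ : List Q.E) : Prop :=
  ∀ b : Q.E, some (Q.tgt b) = psrc Q γ → inI Q R (b :: γ)

/-- `γ · Q_1 ⊆ I` (right decoration `⁻`). -/
def rightI (R : Set (List Q.E)) (γ : List Q.E) : Prop :=
  ∀ b : Q.E, some (Q.src b) = ptgt Q γ → inI Q R (γ ++ [b])

/-- `Q_1 · γ̂ ⊆ I` where `γ = γ̂ α₂`, i.e. `γ̂ = γ.dropLast`. -/
def leftIHat (R : Set (List Q.E)) (γ : List Q.E) : Prop :=
  ∀ b : Q.E, some (Q.tgt b) = psrc Q γ → inI Q R (b :: γ.dropLast)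

/-- `γ̂ · Q_1 ⊆ I` where `γ = α₁ γ̂`, i.e. `γ̂ = γ.tail`. -/
def rightIHat (R : Set (List Q.E)) (γ : List Q.E) : Prop :=
  ∀ b : Q.E, some (Q.src b) = ptgt Q γ → inI Q R (γ.tail ++ [b])

/-- `⁻(0,0)⁻_n`. -/
def mm00 (R : Set (List Q.E)) (n : ℕ) : Set (Pr Q) :=
  {x ∈ cls00 Q R n | leftI Q R x.2 ∧ rightI Q R x.2}

/-- `⁻(0,1)_n`. -/
def m01 (R : Set (List Q.E)) (n : ℕ) : Set (Pr Q) :=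
  {x ∈ cls01 Q R n | leftI Q R x.2}

/-- `⁺⁻(0,1)_n`. -/
def pm01 (R : Set (List Q.E)) (n : ℕ) : Set (Pr Q) :=
  {x ∈ cls01 Q R n | leftI Q R x.2 ∧ ¬ leftIHat Q R x.2}

/-- `⁻⁻(0,1)_n`. -/
def mm01 (R : Set (List Q.E)) (n : ℕ) : Set (Pr Q) :=
  {x ∈ cls01 Q R n | leftI Q R x.2 ∧ leftIHat Q R x.2}

/-- `(1,0)_n⁻`. -/
def m10 (R : Set (List Q.E)) (n : ℕ) : Set (Pr Q) :=
  {x ∈ cls10 Q R n | rightI Q R x.2}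

/-! ### The Hochschild complex obtained from Bardzell's resolution -/

variable (k : Type) [Field k]

/-- The `(y, x)` matrix entry of the differential `F_n` of the Hochschild
complex: for `x = (w, γ) ∈ (AP_n ∥ 𝒫)` and `y = (ψ, γ') ∈ (AP_{n-1} ∥ 𝒫)`, the
signed number of ways of dividing `w = L(ψ) ψ R(ψ)` (with `L, R` not both
trivial) so that `γ = L(ψ) γ' R(ψ)`; the sign is `(-1)^n` for the division
with trivial `L(ψ)` (this reproduces `F_{2m}` and `F_{2m+1}` of the paper). -/
def coeffF (R : Set (List Q.E)) (n : ℕ) (y x : Pr Q) : k :=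
  ∑ᶠ c : Iv,
    if c.1 < c.2 ∧ c.2 ≤ x.1.length ∧ ¬(c.1 = 0 ∧ c.2 = x.1.length) ∧
        y.1 = slice Q x.1 c ∧ x.2 = x.1.take c.1 ++ y.2 ++ x.1.drop c.2 then
      (if c.1 = 0 then (-1 : k) ^ n else 1)
    else 0

/-- The differential `F_n : Hom_{E-E}(kAP_{n-1}, A) → Hom_{E-E}(kAP_n, A)`
(`n ≥ 2`), in the bases `(AP_{n-1} ∥ 𝒫)`, `(AP_n ∥ 𝒫)`. -/
def F (R : Set (List Q.E)) (n : ℕ) [Fintype ↥(PairSet Q R (n - 1))] :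
    (↥(PairSet Q R (n - 1)) → k) →ₗ[k] (↥(PairSet Q R n) → k) :=
  Matrix.mulVecLin (Matrix.of fun x y => coeffF Q k R n y.val x.val)

/-- The differential `F_1 : Hom_{E-E}(kAP_0, A) → Hom_{E-E}(kAP_1, A)`; for a
triangular algebra `Hom_{E-E}(kAP_0, A) ≅ kQ_0`. -/
def F1 (R : Set (List Q.E)) [Fintype Q.V] [Fintype ↥(PairSet Q R 1)] :
    (Q.V → k) →ₗ[k] (↥(PairSet Q R 1) → k) :=
  Matrix.mulVecLin (Matrix.of fun x v =>
    if x.val.2 = x.val.1 then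
      (if ptgt Q x.val.1 = some v then (1 : k) else 0) -
        (if psrc Q x.val.1 = some v then (1 : k) else 0)
    else 0)

/-- `HH^0(A) = Ker F_1`. -/
abbrev HH0 (R : Set (List Q.E)) [Fintype Q.V] [Fintype ↥(PairSet Q R 1)] :=
  ↥(LinearMap.ker (F1 Q k R))

/-- `HH^1(A) = Ker F_2 / Im F_1`. -/
abbrev HH1 (R : Set (List Q.E)) [Fintype Q.V] [∀ j, Fintype ↥(PairSet Q R j)] :=
  ↥(LinearMap.ker (F Q k R 2)) ⧸
    Submodule.comap (LinearMap.ker (F Q k R 2)).subtype (LinearMap.range (F1 Q k R))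

/-- `HH^n(A) = Ker F_{n+1} / Im F_n` for `n ≥ 2`. -/
abbrev HHn (R : Set (List Q.E)) (n : ℕ) [∀ j, Fintype ↥(PairSet Q R j)] :=
  ↥(LinearMap.ker (F Q k R (n + 1))) ⧸
    Submodule.comap (LinearMap.ker (F Q k R (n + 1))).subtype (LinearMap.range (F Q k R n))

/-- The underlying graph of `Q` is connected. -/
def connectedQ : Prop :=
  (SimpleGraph.fromRel fun u v => ∃ a : Q.E, Q.src a = u ∧ Q.tgt a = v).Connected

/-- The underlying graph of the finite quiver `Q` is a tree (connected with
`|Q_1| = |Q_0| - 1`). -/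
def IsTreeQuiv [Fintype Q.V] [Fintype Q.E] : Prop :=
  connectedQ Q ∧ Fintype.card Q.E + 1 = Fintype.card Q.V

/-- A monomial algebra is simply connected iff its quiver is a tree; we use
this characterization as the definition of simple connectedness. -/
def SimplyConnected [Fintype Q.V] [Fintype Q.E] : Prop := IsTreeQuiv Q





section Statement0Aux

variable {R : Set Iv}

lemma RelSet.tgt_le (hR : RelSet R) {r r' : Iv} (hr : r ∈ R) (hr' : r' ∈ R)
    (h : r.1 ≤ r'.1) : r.2 ≤ r'.2 := by
  by_contra h2
  have he := hR.nodiv r hr r' hr' h (by omega)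
  rw [he] at h2
  exact h2 le_rfl

lemma RelSet.src_le (hR : RelSet R) {r r' : Iv} (hr : r ∈ R) (hr' : r' ∈ R)
    (h : r.2 ≤ r'.2) : r.1 ≤ r'.1 := by
  by_contra h2
  have he := hR.nodiv r' hr' r hr (by omega) h
  rw [he] at h2
  exact h2 le_rfl

lemma RelSet.tgt_lt (hR : RelSet R) {r r' : Iv} (hr : r ∈ R) (hr' : r' ∈ R)
    (h : r.1 < r'.1) : r.2 < r'.2 := by
  rcases eq_or_lt_of_le (hR.tgt_le hr hr' h.le) with h2 | h2
  · have := hR.src_le hr' hr h2.ge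
    omega
  · exact h2

lemma RelSet.src_lt (hR : RelSet R) {r r' : Iv} (hr : r ∈ R) (hr' : r' ∈ R)
    (h : r.2 < r'.2) : r.1 < r'.1 := by
  rcases eq_or_lt_of_le (hR.src_le hr hr' h.le) with h2 | h2
  · have := hR.tgt_le hr' hr h2.ge
    omega
  · exact h2

lemma RelSet.src_inj (hR : RelSet R) {r r' : Iv} (hr : r ∈ R) (hr' : r' ∈ R)
    (h : r.1 = r'.1) : r = r' :=
  Prod.ext h (le_antisymm (hR.tgt_le hr hr' h.le) (hR.tgt_le hr' hr h.ge))

lemma RelSet.tgt_inj (hR : RelSet R) {r r' : Iv} (hr : r ∈ R) (hr' : r' ∈ R)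
    (h : r.2 = r'.2) : r = r' :=
  Prod.ext (le_antisymm (hR.src_le hr hr' h.le) (hR.src_le hr' hr h.ge)) h

lemma cWindow_one (p : ℕ → Iv) :
    cWindow R p 1 = {r | r ∈ R ∧ (p 0).1 < r.1 ∧ r.1 < (p 0).2} := if_pos rfl

lemma cWindow_ge2 (p : ℕ → Iv) {i : ℕ} (h : i ≠ 1) :
    cWindow R p i = {r | r ∈ R ∧ (p (i-2)).2 ≤ r.1 ∧ r.1 < (p (i-1)).2} := if_neg h

lemma oWindow_one (q : ℕ → Iv) :
    oWindow R q 1 = {r | r ∈ R ∧ (q 0).1 < r.2 ∧ r.2 < (q 0).2} := if_pos rfl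

lemma oWindow_ge2 (q : ℕ → Iv) {i : ℕ} (h : i ≠ 1) :
    oWindow R q i = {r | r ∈ R ∧ (q (i-1)).1 < r.2 ∧ r.2 ≤ (q (i-2)).1} := if_neg h

lemma oWindow_sub (q : ℕ → Iv) (i : ℕ) : oWindow R q i ⊆ R := by
  unfold oWindow; split_ifs <;> exact fun r hr => hr.1

lemma cWindow_sub (p : ℕ → Iv) (i : ℕ) : cWindow R p i ⊆ R := by
  unfold cWindow; split_ifs <;> exact fun r hr => hr.1

lemma oWindow_congr {q q' : ℕ → Iv} (i : ℕ) (h1 : q' (i-1) = q (i-1))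
    (h2 : q' (i-2) = q (i-2)) : oWindow R q' i = oWindow R q i := by
  unfold oWindow
  split_ifs with h
  · subst h
    rw [show q' 0 = q 0 from h1]
  · rw [h1, h2]

lemma cWindow_congr {p p' : ℕ → Iv} (i : ℕ) (h1 : p' (i-1) = p (i-1))
    (h2 : p' (i-2) = p (i-2)) : cWindow R p' i = cWindow R p i := by
  unfold cWindow
  split_ifs with h
  · subst h
    rw [show p' 0 = p 0 from h1]
  · rw [h1, h2]

lemma exists_maxTgt {W : Set Iv} (hW : W.Nonempty) {B : ℕ} (hB : ∀ r ∈ W, r.2 ≤ B) :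
    ∃ m, m ∈ W ∧ ∀ r ∈ W, r.2 ≤ m.2 := by
  have hS : (Prod.snd '' W).Nonempty := hW.image _
  have hBdd : BddAbove (Prod.snd '' W) := ⟨B, by rintro x ⟨r, hr, rfl⟩; exact hB r hr⟩
  obtain ⟨m, hm, hm2⟩ := Nat.sSup_mem hS hBdd
  exact ⟨m, hm, fun r hr => hm2 ▸ le_csSup hBdd ⟨r, hr, rfl⟩⟩

lemma exists_minSrc {W : Set Iv} (hW : W.Nonempty) :
    ∃ m, m ∈ W ∧ ∀ r ∈ W, m.1 ≤ r.1 := by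
  obtain ⟨m, hm, hm2⟩ := Nat.sInf_mem (hW.image Prod.fst)
  exact ⟨m, hm, fun r hr => hm2 ▸ csInf_le (OrderBot.bddBelow _) ⟨r, hr, rfl⟩⟩

/-- The window from which the next element of an op-concatenation is chosen. -/
def opW (R : Set Iv) (prev cur : Iv) : Set Iv := {r | r ∈ R ∧ cur.1 < r.2 ∧ r.2 ≤ prev.1}

/-- The next element of an op-concatenation: max target in the window. -/
noncomputable def opNext (R : Set Iv) (prev cur : Iv) : Iv :=
  if h : (opW R prev cur).Nonempty then
    (exists_maxTgt h (fun r hr => hr.2.2)).choose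
  else (0, 0)

lemma opNext_mem {prev cur : Iv} (h : (opW R prev cur).Nonempty) :
    opNext R prev cur ∈ opW R prev cur ∧ ∀ r ∈ opW R prev cur, r.2 ≤ (opNext R prev cur).2 := by
  rw [opNext, dif_pos h]
  exact (exists_maxTgt h fun r hr => hr.2.2).choose_spec

/-- The greedy op-concatenation starting at `q0` (pairs of consecutive terms). -/
noncomputable def opSeq (R : Set Iv) (q0 : Iv) : ℕ → Iv × Iv
  | 0 => ((q0.2 - 1, 0), q0)
  | (i+1) => ((opSeq R q0 i).2, opNext R (opSeq R q0 i).1 (opSeq R q0 i).2)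

noncomputable def opQ (R : Set Iv) (q0 : Iv) (i : ℕ) : Iv := (opSeq R q0 i).2

/-- The window from which the next element of a concatenation is chosen. -/
def cW (R : Set Iv) (prev cur : Iv) : Set Iv := {r | r ∈ R ∧ prev.2 ≤ r.1 ∧ r.1 < cur.2}

/-- The next element of a concatenation: min source in the window. -/
noncomputable def cNext (R : Set Iv) (prev cur : Iv) : Iv :=
  if h : (cW R prev cur).Nonempty then (exists_minSrc h).choose else (0, 0)

lemma cNext_mem {prev cur : Iv} (h : (cW R prev cur).Nonempty) :
    cNext R prev cur ∈ cW R prev cur ∧ ∀ r ∈ cW R prev cur, (cNext R prev cur).1 ≤ r.1 := by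
  rw [cNext, dif_pos h]
  exact (exists_minSrc h).choose_spec

/-- The greedy concatenation starting at `p0`. -/
noncomputable def cSeq (R : Set Iv) (p0 : Iv) : ℕ → Iv × Iv
  | 0 => ((0, p0.1 + 1), p0)
  | (i+1) => ((cSeq R p0 i).2, cNext R (cSeq R p0 i).1 (cSeq R p0 i).2)

noncomputable def cP (R : Set Iv) (p0 : Iv) (i : ℕ) : Iv := (cSeq R p0 i).2

end Statement0Aux


section Statement0Main

variable {R : Set Iv}

lemma op_of_concat (hR : RelSet R) (k1 : ℕ) (p : ℕ → Iv) (hp : IsConcat R (k1+1) p) :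
    ∃ q : ℕ → Iv,
      (IsOpConcat R (k1+1) q ∧ (q k1).1 = (p 0).1 ∧ (q 0).2 = (p k1).2) ∧
      ∀ q' : ℕ → Iv, IsOpConcat R (k1+1) q' → (q' 0).2 = (p k1).2 →
        ∀ i ≤ k1, q' i = q i := by
  -- facts about the concatenation `p`
  have hwin : ∀ j, 1 ≤ j → j ≤ k1 →
      p j ∈ cWindow R p j ∧ ∀ r ∈ cWindow R p j, (p j).1 ≤ r.1 :=
    fun j h1 h2 => hp.2 j h1 (by omega)
  have hpR : ∀ j, j ≤ k1 → p j ∈ R := by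
    intro j hj
    rcases Nat.eq_zero_or_pos j with rfl | hj0
    · exact hp.1
    · exact cWindow_sub p j (hwin j hj0 hj).1
  have hps : ∀ j, 1 ≤ j → j ≤ k1 → (p j).1 < (p (j-1)).2 := by
    intro j h1 h2
    have h := (hwin j h1 h2).1
    unfold cWindow at h
    split_ifs at h with he
    · rw [he]; rw [he] at h; exact h.2.2
    · exact h.2.2
  have hpl : ∀ j, 2 ≤ j → j ≤ k1 → (p (j-2)).2 ≤ (p j).1 := by
    intro j h1 h2
    have h := (hwin j (by omega) h2).1
    rw [cWindow_ge2 p (by omega)] at h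
    exact h.2.1
  have hp1 : 1 ≤ k1 → (p 0).1 < (p 1).1 := by
    intro h
    have hh := (hwin 1 le_rfl h).1
    rw [cWindow_one p] at hh
    exact hh.2.1
  have hmin : ∀ j, 1 ≤ j → j ≤ k1 → ∀ r ∈ cWindow R p j, (p j).1 ≤ r.1 :=
    fun j h1 h2 => (hwin j h1 h2).2
  have hss : ∀ j, j + 1 ≤ k1 → (p j).1 < (p (j+1)).1 := by
    intro j hj
    rcases Nat.eq_zero_or_pos j with rfl | hj0
    · exact hp1 (by omega)
    · have h1 := hpl (j+1) (by omega) hj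
      have h2 := hps j hj0 (by omega)
      have he : (j+1) - 2 = j - 1 := by omega
      rw [he] at h1
      omega
  have hsrc_mono : ∀ j j', j < j' → j' ≤ k1 → (p j).1 < (p j').1 := by
    intro j j'
    induction j' with
    | zero => omega
    | succ m ih =>
      intro hlt hle
      rcases Nat.lt_or_ge j m with h | h
      · exact lt_trans (ih h (by omega)) (hss m hle)
      · have hjm : j = m := by omega
        subst hjm
        exact hss j hle
  have htgt_mono : ∀ j j', j < j' → j' ≤ k1 → (p j).2 < (p j').2 :=
    fun j j' h h' => hR.tgt_lt (hpR j (by omega)) (hpR j' h') (hsrc_mono j j' h h')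
  -- the greedy op-concatenation and its basic equations
  set q := opQ R (p k1) with hq
  have hq0 : q 0 = p k1 := by rw [hq]; rfl
  have hseq2 : ∀ m, (opSeq R (p k1) m).2 = q m := fun m => by rw [hq]; rfl
  have hqsucc : ∀ m, q (m+1) = opNext R (opSeq R (p k1) m).1 (q m) := by
    intro m
    rw [← hseq2 m, hq]
    rfl
  have hseqf : ∀ m, (opSeq R (p k1) (m+1)).1 = q m := fun m => hseq2 m
  have hseqf0 : (opSeq R (p k1) 0).1 = ((p k1).2 - 1, 0) := rfl
  -- the key invariant
  have key : ∀ i, i ≤ k1 →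
      q i ∈ R ∧ (p (k1 - i)).1 ≤ (q i).1 ∧
      (i < k1 → (q i).1 < (p (k1 - 1 - i)).2) ∧
      (1 ≤ i → q i ∈ oWindow R q i ∧ ∀ r ∈ oWindow R q i, r.2 ≤ (q i).2) := by
    intro i
    induction i using Nat.strong_induction_on with
    | _ i ih =>
    intro hik
    rcases i with _ | m
    · refine ⟨hq0 ▸ hpR k1 le_rfl, ?_, ?_, by omega⟩
      · rw [Nat.sub_zero, hq0]
      · intro h0
        rw [Nat.sub_zero, hq0]
        exact hps k1 (by omega) le_rfl
    · -- step: i = m + 1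
      have hm := ih m (by omega) (by omega)
      have hj1 : 1 ≤ k1 - m := by omega
      -- the window at step m+1 equals `opW` of the previous data
      have hWeq : opW R (opSeq R (p k1) m).1 (q m) = oWindow R q (m+1) := by
        rcases m with _ | mm
        · rw [hseqf0, oWindow_one q]
          have h2 := hR.len (p k1) (hpR k1 le_rfl)
          ext r
          simp only [opW, Set.mem_setOf_eq, hq0]
          constructor
          · rintro ⟨ha, hb, hc⟩
            exact ⟨ha, hb, by omega⟩
          · rintro ⟨ha, hb, hc⟩
            exact ⟨ha, hb, by omega⟩
        · rw [hseqf mm, oWindow_ge2 q (show mm + 1 + 1 ≠ 1 by omega)]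
          have e1 : mm + 1 + 1 - 1 = mm + 1 := by omega
          have e2 : mm + 1 + 1 - 2 = mm := by omega
          rw [e1, e2]
          rfl
      -- `p (k1 - m - 1)` belongs to the window
      have hmem : p (k1 - m - 1) ∈ oWindow R q (m+1) := by
        rcases m with _ | mm
        · rw [oWindow_one q]
          refine ⟨hpR (k1 - 0 - 1) (by omega), ?_, ?_⟩
          · rw [hq0]
            have := hps k1 (by omega) le_rfl
            have e : k1 - 0 - 1 = k1 - 1 := by omega
            rw [e]
            exact this
          · rw [hq0]
            have e : k1 - 0 - 1 = k1 - 1 := by omega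
            rw [e]
            exact htgt_mono (k1 - 1) k1 (by omega) le_rfl
        · rw [oWindow_ge2 q (show mm + 1 + 1 ≠ 1 by omega)]
          have e1 : mm + 1 + 1 - 1 = mm + 1 := by omega
          have e2 : mm + 1 + 1 - 2 = mm := by omega
          rw [e1, e2]
          have hmm := ih mm (by omega) (by omega)
          refine ⟨hpR _ (by omega), ?_, ?_⟩
          · have hD := hm.2.2.1 (by omega)
            have e : k1 - 1 - (mm + 1) = k1 - (mm + 1) - 1 := by omega
            rw [e] at hD
            exact hD
          · have hA := hmm.2.1
            have h2 := hpl (k1 - mm) (by omega) (by omega)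
            have e3 : k1 - mm - 2 = k1 - (mm + 1) - 1 := by omega
            rw [e3] at h2
            exact le_trans h2 hA
      have hne : (opW R (opSeq R (p k1) m).1 (q m)).Nonempty := by
        rw [hWeq]
        exact ⟨_, hmem⟩
      have hspec := opNext_mem (R := R) hne
      rw [← hqsucc m, hWeq] at hspec
      have hqR : q (m+1) ∈ R := oWindow_sub q (m+1) hspec.1
      have hA : (p (k1 - (m+1))).1 ≤ (q (m+1)).1 := by
        have ht := hspec.2 _ hmem
        have e : k1 - (m+1) = k1 - m - 1 := by omega
        rw [e]
        exact hR.src_le (hpR _ (by omega)) hqR ht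
      refine ⟨hqR, hA, ?_, fun _ => hspec⟩
      -- the D-invariant
      intro hlt
      by_contra hcon
      push_neg at hcon
      -- upper bound: (q (m+1)).2 < (p (k1 - m)).2
      have hub : (q (m+1)).2 < (p (k1 - m)).2 := by
        rcases m with _ | mm
        · have hmem1 := hspec.1
          rw [oWindow_one q, hq0] at hmem1
          have e : k1 - 0 = k1 := by omega
          rw [e]
          exact hmem1.2.2
        · have hmem1 := hspec.1
          rw [oWindow_ge2 q (show mm + 1 + 1 ≠ 1 by omega)] at hmem1
          have e2 : mm + 1 + 1 - 2 = mm := by omega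
          rw [e2] at hmem1
          have hmm := ih mm (by omega) (by omega)
          have hD := hmm.2.2.1 (by omega)
          have e : k1 - 1 - mm = k1 - (mm + 1) := by omega
          rw [e] at hD
          exact lt_of_le_of_lt hmem1.2.2 hD
      have hjk : k1 - m ≤ k1 := by omega
      have hmono : (p (k1 - m)).1 ≤ (q (m+1)).1 := by
        have e2 : k1 - 1 - (m+1) = k1 - m - 2 := by omega
        rw [e2] at hcon
        by_cases hc : (q (m+1)).1 < (p (k1 - m - 1)).2
        · refine hmin (k1 - m) (by omega) hjk (q (m+1)) ?_
          rw [cWindow_ge2 p (show k1 - m ≠ 1 by omega)]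
          exact ⟨hqR, hcon, hc⟩
        · push_neg at hc
          have := hps (k1 - m) (by omega) hjk
          omega
      have := hR.tgt_le (hpR _ hjk) hqR hmono
      omega
  -- assemble the op-concatenation
  have hop : IsOpConcat R (k1+1) q :=
    ⟨hq0 ▸ hpR k1 le_rfl, fun i h1 h2 => (key i (by omega)).2.2.2 h1⟩
  -- left endpoint
  have hend : (q k1).1 = (p 0).1 := by
    rcases Nat.eq_zero_or_pos k1 with rfl | hk1
    · rw [hq0]
    · have hge := (key k1 le_rfl).2.1
      rw [Nat.sub_self] at hge
      have hqk1R := (key k1 le_rfl).1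
      have hub : (q k1).2 < (p 1).2 := by
        have hmem1 := ((key k1 le_rfl).2.2.2 hk1).1
        rcases Nat.lt_or_ge k1 2 with hk2 | hk2
        · have e : k1 = 1 := by omega
          subst e
          rw [oWindow_one q, hq0] at hmem1
          exact hmem1.2.2
        · rw [oWindow_ge2 q (by omega)] at hmem1
          have hD := (key (k1-2) (by omega)).2.2.1 (by omega)
          have e : k1 - 1 - (k1 - 2) = 1 := by omega
          rw [e] at hD
          exact lt_of_le_of_lt hmem1.2.2 hD
      have hle : (q k1).1 ≤ (p 0).1 := by
        by_contra hgt
        push_neg at hgt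
        have hmono : (p 1).1 ≤ (q k1).1 := by
          by_cases hc : (q k1).1 < (p 0).2
          · refine hmin 1 le_rfl hk1 (q k1) ?_
            rw [cWindow_one p]
            exact ⟨hqk1R, hgt, hc⟩
          · push_neg at hc
            have h9 := hps 1 le_rfl hk1
            rw [show (1:ℕ) - 1 = 0 from rfl] at h9
            omega
        have := hR.tgt_le (hpR 1 hk1) hqk1R hmono
        omega
      omega
  -- uniqueness
  refine ⟨q, ⟨hop, hend, hq0 ▸ rfl⟩, ?_⟩
  intro q' hq' hq'0 i
  induction i using Nat.strong_induction_on with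
  | _ i ih =>
  intro hik
  rcases i with _ | m
  · exact hR.tgt_inj hq'.1 (hq0 ▸ hpR k1 le_rfl) (by rw [hq'0, hq0])
  · have h1 := ih m (by omega) (by omega)
    have hWe : oWindow R q' (m+1) = oWindow R q (m+1) := by
      refine oWindow_congr (m+1) ?_ ?_
      · simpa using h1
      · rcases m with _ | mm
        · simpa using h1
        · have := ih mm (by omega) (by omega)
          simpa using this
    have hh' := hq'.2 (m+1) (by omega) (by omega)
    have hh := (key (m+1) (by omega)).2.2.2 (by omega)
    rw [hWe] at hh'
    have e1 : (q' (m+1)).2 ≤ (q (m+1)).2 := hh.2 _ hh'.1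
    have e2 : (q (m+1)).2 ≤ (q' (m+1)).2 := hh'.2 _ hh.1
    exact hR.tgt_inj (oWindow_sub q (m+1) hh'.1) (oWindow_sub q (m+1) hh.1) (by omega)

lemma concat_of_op (hR : RelSet R) (k1 : ℕ) (q : ℕ → Iv) (hq : IsOpConcat R (k1+1) q) :
    ∃ p : ℕ → Iv,
      (IsConcat R (k1+1) p ∧ (p 0).1 = (q k1).1 ∧ (p k1).2 = (q 0).2) ∧
      ∀ p' : ℕ → Iv, IsConcat R (k1+1) p' → (p' 0).1 = (q k1).1 →
        ∀ i ≤ k1, p' i = p i := by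
  -- facts about the op-concatenation `q`
  have hwin : ∀ j, 1 ≤ j → j ≤ k1 →
      q j ∈ oWindow R q j ∧ ∀ r ∈ oWindow R q j, r.2 ≤ (q j).2 :=
    fun j h1 h2 => hq.2 j h1 (by omega)
  have hqR : ∀ j, j ≤ k1 → q j ∈ R := by
    intro j hj
    rcases Nat.eq_zero_or_pos j with rfl | hj0
    · exact hq.1
    · exact oWindow_sub q j (hwin j hj0 hj).1
  have hqt : ∀ j, 1 ≤ j → j ≤ k1 → (q (j-1)).1 < (q j).2 := by
    intro j h1 h2
    have h := (hwin j h1 h2).1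
    unfold oWindow at h
    split_ifs at h with he
    · rw [he]; rw [he] at h; exact h.2.1
    · exact h.2.1
  have hql : ∀ j, 2 ≤ j → j ≤ k1 → (q j).2 ≤ (q (j-2)).1 := by
    intro j h1 h2
    have h := (hwin j (by omega) h2).1
    rw [oWindow_ge2 q (by omega)] at h
    exact h.2.2
  have hq1 : 1 ≤ k1 → (q 1).2 < (q 0).2 := by
    intro h
    have hh := (hwin 1 le_rfl h).1
    rw [oWindow_one q] at hh
    exact hh.2.2
  have hmax : ∀ j, 1 ≤ j → j ≤ k1 → ∀ r ∈ oWindow R q j, r.2 ≤ (q j).2 :=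
    fun j h1 h2 => (hwin j h1 h2).2
  have hts : ∀ j, j + 1 ≤ k1 → (q (j+1)).2 < (q j).2 := by
    intro j hj
    rcases Nat.eq_zero_or_pos j with rfl | hj0
    · exact hq1 (by omega)
    · have h1 := hql (j+1) (by omega) hj
      have h2 := hqt j hj0 (by omega)
      have he : (j+1) - 2 = j - 1 := by omega
      rw [he] at h1
      omega
  have htgt_mono : ∀ j j', j < j' → j' ≤ k1 → (q j').2 < (q j).2 := by
    intro j j'
    induction j' with
    | zero => omega
    | succ m ih =>
      intro hlt hle
      rcases Nat.lt_or_ge j m with h | h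
      · exact lt_trans (hts m hle) (ih h (by omega))
      · have hjm : j = m := by omega
        subst hjm
        exact hts j hle
  have hsrc_mono : ∀ j j', j < j' → j' ≤ k1 → (q j').1 < (q j).1 :=
    fun j j' h h' => hR.src_lt (hqR j' h') (hqR j (by omega)) (htgt_mono j j' h h')
  -- the greedy concatenation and its basic equations
  set p := cP R (q k1) with hpdef
  have hp0 : p 0 = q k1 := by rw [hpdef]; rfl
  have hseq2 : ∀ m, (cSeq R (q k1) m).2 = p m := fun m => by rw [hpdef]; rfl
  have hpsucc : ∀ m, p (m+1) = cNext R (cSeq R (q k1) m).1 (p m) := by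
    intro m
    rw [← hseq2 m, hpdef]
    rfl
  have hseqf : ∀ m, (cSeq R (q k1) (m+1)).1 = p m := fun m => hseq2 m
  have hseqf0 : (cSeq R (q k1) 0).1 = (0, (q k1).1 + 1) := rfl
  -- the key invariant
  have key : ∀ i, i ≤ k1 →
      p i ∈ R ∧ (p i).2 ≤ (q (k1 - i)).2 ∧
      (i < k1 → (q (k1 - 1 - i)).1 < (p i).2) ∧
      (1 ≤ i → p i ∈ cWindow R p i ∧ ∀ r ∈ cWindow R p i, (p i).1 ≤ r.1) := by
    intro i
    induction i using Nat.strong_induction_on with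
    | _ i ih =>
    intro hik
    rcases i with _ | m
    · refine ⟨hp0 ▸ hqR k1 le_rfl, ?_, ?_, by omega⟩
      · rw [Nat.sub_zero, hp0]
      · intro h0
        rw [Nat.sub_zero, hp0]
        exact hqt k1 (by omega) le_rfl
    · -- step: i = m + 1
      have hm := ih m (by omega) (by omega)
      have hj1 : 1 ≤ k1 - m := by omega
      have hWeq : cW R (cSeq R (q k1) m).1 (p m) = cWindow R p (m+1) := by
        rcases m with _ | mm
        · rw [hseqf0, cWindow_one p, hp0]
          ext r
          simp only [cW, Set.mem_setOf_eq, hp0]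
          constructor
          · rintro ⟨ha, hb, hc⟩
            exact ⟨ha, by omega, hc⟩
          · rintro ⟨ha, hb, hc⟩
            exact ⟨ha, by omega, hc⟩
        · rw [hseqf mm, cWindow_ge2 p (show mm + 1 + 1 ≠ 1 by omega)]
          have e1 : mm + 1 + 1 - 1 = mm + 1 := by omega
          have e2 : mm + 1 + 1 - 2 = mm := by omega
          rw [e1, e2]
          rfl
      have hmem : q (k1 - m - 1) ∈ cWindow R p (m+1) := by
        rcases m with _ | mm
        · rw [cWindow_one p, hp0]
          refine ⟨hqR (k1 - 0 - 1) (by omega), ?_, ?_⟩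
          · have e : k1 - 0 - 1 = k1 - 1 := by omega
            rw [e]
            exact hsrc_mono (k1 - 1) k1 (by omega) le_rfl
          · have hD := hm.2.2.1 (by omega)
            have e : k1 - 1 - 0 = k1 - 0 - 1 := by omega
            rw [e, hp0] at hD
            exact hD
        · rw [cWindow_ge2 p (show mm + 1 + 1 ≠ 1 by omega)]
          have e1 : mm + 1 + 1 - 1 = mm + 1 := by omega
          have e2 : mm + 1 + 1 - 2 = mm := by omega
          rw [e1, e2]
          have hmm := ih mm (by omega) (by omega)
          refine ⟨hqR _ (by omega), ?_, ?_⟩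
          · have hA := hmm.2.1
            have h2 := hql (k1 - mm) (by omega) (by omega)
            have e3 : k1 - mm - 2 = k1 - (mm + 1) - 1 := by omega
            rw [e3] at h2
            exact le_trans hA h2
          · have hD := hm.2.2.1 (by omega)
            have e : k1 - 1 - (mm + 1) = k1 - (mm + 1) - 1 := by omega
            rw [e] at hD
            exact hD
      have hne : (cW R (cSeq R (q k1) m).1 (p m)).Nonempty := by
        rw [hWeq]
        exact ⟨_, hmem⟩
      have hspec := cNext_mem (R := R) hne
      rw [← hpsucc m, hWeq] at hspec
      have hpmR : p (m+1) ∈ R := cWindow_sub p (m+1) hspec.1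
      have hA : (p (m+1)).2 ≤ (q (k1 - (m+1))).2 := by
        have ht := hspec.2 _ hmem
        have e : k1 - (m+1) = k1 - m - 1 := by omega
        rw [e]
        exact hR.tgt_le hpmR (hqR _ (by omega)) ht
      refine ⟨hpmR, hA, ?_, fun _ => hspec⟩
      intro hlt
      by_contra hcon
      push_neg at hcon
      have e2 : k1 - 1 - (m+1) = k1 - m - 2 := by omega
      rw [e2] at hcon
      have hlb : (q (k1 - m)).1 < (p (m+1)).1 := by
        rcases m with _ | mm
        · have hmem1 := hspec.1
          rw [cWindow_one p, hp0] at hmem1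
          have e : k1 - 0 = k1 := by omega
          rw [e]
          exact hmem1.2.1
        · have hmem1 := hspec.1
          rw [cWindow_ge2 p (show mm + 1 + 1 ≠ 1 by omega)] at hmem1
          have e3 : mm + 1 + 1 - 2 = mm := by omega
          rw [e3] at hmem1
          have hmm := ih mm (by omega) (by omega)
          have hD := hmm.2.2.1 (by omega)
          have e : k1 - 1 - mm = k1 - (mm + 1) := by omega
          rw [e] at hD
          exact lt_of_lt_of_le hD hmem1.2.1
      have hjk : k1 - m ≤ k1 := by omega
      have hmono : (p (m+1)).2 ≤ (q (k1 - m)).2 := by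
        by_cases hc : (q (k1 - m - 1)).1 < (p (m+1)).2
        · refine hmax (k1 - m) (by omega) hjk (p (m+1)) ?_
          rw [oWindow_ge2 q (show k1 - m ≠ 1 by omega)]
          have e3 : k1 - m - 1 = k1 - m - 1 := rfl
          have e4 : k1 - m - 2 = k1 - m - 2 := rfl
          refine ⟨hpmR, ?_, ?_⟩
          · have e5 : k1 - m - 1 = k1 - m - 1 := rfl
            rw [show k1 - m - 1 = k1 - m - 1 from rfl]
            have e6 : (k1 - m) - 1 = k1 - m - 1 := rfl
            exact hc
          · exact hcon
        · push_neg at hc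
          have h9 := hqt (k1 - m) (by omega) hjk
          omega
      have := hR.src_le hpmR (hqR _ hjk) hmono
      omega
  have hcat : IsConcat R (k1+1) p :=
    ⟨hp0 ▸ hqR k1 le_rfl, fun i h1 h2 => (key i (by omega)).2.2.2 h1⟩
  have hend : (p k1).2 = (q 0).2 := by
    rcases Nat.eq_zero_or_pos k1 with rfl | hk1
    · rw [hp0]
    · have hle := (key k1 le_rfl).2.1
      rw [Nat.sub_self] at hle
      have hpk1R := (key k1 le_rfl).1
      have hlb : (q 1).1 < (p k1).1 := by
        have hmem1 := ((key k1 le_rfl).2.2.2 hk1).1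
        rcases Nat.lt_or_ge k1 2 with hk2 | hk2
        · have e : k1 = 1 := by omega
          subst e
          rw [cWindow_one p, hp0] at hmem1
          exact hmem1.2.1
        · rw [cWindow_ge2 p (by omega)] at hmem1
          have hD := (key (k1-2) (by omega)).2.2.1 (by omega)
          have e : k1 - 1 - (k1 - 2) = 1 := by omega
          rw [e] at hD
          exact lt_of_lt_of_le hD hmem1.2.1
      have hge : (q 0).2 ≤ (p k1).2 := by
        by_contra hgt
        push_neg at hgt
        have hmono : (p k1).2 ≤ (q 1).2 := by
          by_cases hc : (q 0).1 < (p k1).2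
          · refine hmax 1 le_rfl hk1 (p k1) ?_
            rw [oWindow_one q]
            exact ⟨hpk1R, hc, hgt⟩
          · push_neg at hc
            have h9 := hqt 1 le_rfl hk1
            rw [show (1:ℕ) - 1 = 0 from rfl] at h9
            omega
        have := hR.src_le hpk1R (hqR 1 hk1) hmono
        omega
      omega
  refine ⟨p, ⟨hcat, hp0 ▸ rfl, hend⟩, ?_⟩
  intro p' hp' hp'0 i
  induction i using Nat.strong_induction_on with
  | _ i ih =>
  intro hik
  rcases i with _ | m
  · exact hR.src_inj hp'.1 (hp0 ▸ hqR k1 le_rfl) (by rw [hp'0, hp0])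
  · have h1 := ih m (by omega) (by omega)
    have hWe : cWindow R p' (m+1) = cWindow R p (m+1) := by
      refine cWindow_congr (m+1) ?_ ?_
      · simpa using h1
      · rcases m with _ | mm
        · simpa using h1
        · have := ih mm (by omega) (by omega)
          simpa using this
    have hh' := hp'.2 (m+1) (by omega) (by omega)
    have hh := (key (m+1) (by omega)).2.2.2 (by omega)
    rw [hWe] at hh'
    have e1 : (p (m+1)).1 ≤ (p' (m+1)).1 := hh.2 _ hh'.1
    have e2 : (p' (m+1)).1 ≤ (p (m+1)).1 := hh'.2 _ hh.1
    exact hR.src_inj (cWindow_sub p (m+1) hh'.1) (cWindow_sub p (m+1) hh.1) (by omega)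


end Statement0Main

/-- **Lemma 3.1 (Bardzell) / Statement 0.** For `n ≥ 2`, `AP_n = AP_n^{op}`:
for any `n`-concatenation `(p_1, …, p_{n-1})` of relations along a directed
path there exists a unique `n`-op-concatenation `(q^1, …, q^{n-1})` with the
same support path, and conversely.  (Recall `q^j = q (n - 1 - j)` in our
0-based indexing, so the op-support runs from `(q (n-2)).1` to `(q 0).2`.) -/
theorem statement0 (R : Set Iv) (hR : RelSet R) (n : ℕ) (hn : 2 ≤ n) :
    (∀ p : ℕ → Iv, IsConcat R (n - 1) p →
      ∃ q : ℕ → Iv,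
        (IsOpConcat R (n - 1) q ∧ (q (n - 2)).1 = (p 0).1 ∧ (q 0).2 = (p (n - 2)).2) ∧
        ∀ q' : ℕ → Iv, IsOpConcat R (n - 1) q' → (q' (n - 2)).1 = (p 0).1 →
          (q' 0).2 = (p (n - 2)).2 → ∀ i < n - 1, q' i = q i) ∧
    (∀ q : ℕ → Iv, IsOpConcat R (n - 1) q →
      ∃ p : ℕ → Iv,
        (IsConcat R (n - 1) p ∧ (p 0).1 = (q (n - 2)).1 ∧ (p (n - 2)).2 = (q 0).2) ∧
        ∀ p' : ℕ → Iv, IsConcat R (n - 1) p' → (p' 0).1 = (q (n - 2)).1 →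
          (p' (n - 2)).2 = (q 0).2 → ∀ i < n - 1, p' i = p i) := by
  obtain ⟨k1, rfl⟩ : ∃ k1, n = k1 + 2 := ⟨n - 2, by omega⟩
  constructor
  · intro p hp
    obtain ⟨q, hmain, huniq⟩ := op_of_concat hR k1 p hp
    exact ⟨q, hmain, fun q' h1 _ h3 i hi => huniq q' h1 h3 i (by omega)⟩
  · intro q hq
    obtain ⟨p, hmain, huniq⟩ := concat_of_op hR k1 q hq
    exact ⟨p, hmain, fun p' h1 h2 _ i hi => huniq p' h1 h2 i (by omega)⟩


end Paper
end
end

section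
/- Let w = w(p_1,…,p_{n-1}) = w^{op}(q^1,…,q^{n-1}) be the common support of an n-concatenation and its corresponding n-op-concatenation. If q^m has length two for some 1 < m < n, then q^m = p_m and q^{m-1} = p_{m-1}. -/
/-!
Common framework for formalizing "Hochschild cohomology of triangular string
algebras and its ring structure" (Redondo–Román).

* Interval combinatorics model of Bardzell's `n`-concatenations along a directed
  path (a directed path is modelled by the line `ℕ`, a subpath by an interval,
  and a relation by the interval it occupies).
* A combinatorial model of a bound quiver `(Q, I)` with `I` a monomial ideal
  generated by a reduced set `R` of paths: paths are nonempty composable lists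
  of arrows, `AP_n` is the set of supports of `n`-concatenations, `𝒫` is the
  basis of `A = kQ/I` given by the paths not in `I`.
* The Hochschild complex `Hom_{E-E}(kAP_n, A) ≅ k(AP_n ∥ 𝒫)` of a (triangular)
  monomial algebra obtained from Bardzell's minimal resolution, with its
  differentials `F_n` realized as explicit matrices, and the Hochschild
  cohomology `HH^n(A)` defined as the cohomology of this complex (for monomial
  algebras this complex computes Hochschild cohomology, by Bardzell's theorem).
-/

attribute [local instance] Classical.propDecidable

noncomputable section

namespace Paper

variable (Q : QuivData)

/-! ### The Hochschild complex obtained from Bardzell's resolution -/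

variable (k : Type) [Field k]

section AuxLemmas

variable {R : Set Iv} {K : ℕ} {p q : ℕ → Iv}

theorem IsConcat.rel (hp : IsConcat R K p) {i : ℕ} (hi : i < K) : p i ∈ R := by
  rcases Nat.eq_zero_or_pos i with rfl | h
  · exact hp.1
  · have h0 := (hp.2 i h hi).1
    unfold cWindow at h0
    split_ifs at h0 <;> simp only [Set.mem_setOf_eq] at h0 <;> exact h0.1

theorem IsConcat.win1 (hp : IsConcat R K p) (h : 1 < K) :
    p 1 ∈ R ∧ (p 0).1 < (p 1).1 ∧ (p 1).1 < (p 0).2 := by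
  have h0 := (hp.2 1 le_rfl h).1
  unfold cWindow at h0
  rw [if_pos rfl] at h0
  simp only [Set.mem_setOf_eq] at h0
  exact h0

theorem IsConcat.win (hp : IsConcat R K p) {i : ℕ} (h : i + 2 < K) :
    p (i + 2) ∈ R ∧ (p i).2 ≤ (p (i + 2)).1 ∧ (p (i + 2)).1 < (p (i + 1)).2 := by
  have h0 := (hp.2 (i + 2) (by omega) h).1
  unfold cWindow at h0
  rw [if_neg (by omega : i + 2 ≠ 1)] at h0
  simp only [Set.mem_setOf_eq] at h0
  exact h0

theorem IsConcat.min (hp : IsConcat R K p) {i : ℕ} (h : i + 2 < K) {r : Iv} (hr : r ∈ R)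
    (h1 : (p i).2 ≤ r.1) (h2 : r.1 < (p (i + 1)).2) : (p (i + 2)).1 ≤ r.1 := by
  refine (hp.2 (i + 2) (by omega) h).2 r ?_
  unfold cWindow
  rw [if_neg (by omega : i + 2 ≠ 1)]
  simp only [Set.mem_setOf_eq]
  exact ⟨hr, h1, h2⟩

theorem IsOpConcat.rel (hq : IsOpConcat R K q) {i : ℕ} (hi : i < K) : q i ∈ R := by
  rcases Nat.eq_zero_or_pos i with rfl | h
  · exact hq.1
  · have h0 := (hq.2 i h hi).1
    unfold oWindow at h0
    split_ifs at h0 <;> simp only [Set.mem_setOf_eq] at h0 <;> exact h0.1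

theorem IsOpConcat.win1 (hq : IsOpConcat R K q) (h : 1 < K) :
    q 1 ∈ R ∧ (q 0).1 < (q 1).2 ∧ (q 1).2 < (q 0).2 := by
  have h0 := (hq.2 1 le_rfl h).1
  unfold oWindow at h0
  rw [if_pos rfl] at h0
  simp only [Set.mem_setOf_eq] at h0
  exact h0

theorem IsOpConcat.win (hq : IsOpConcat R K q) {i : ℕ} (h : i + 2 < K) :
    q (i + 2) ∈ R ∧ (q (i + 1)).1 < (q (i + 2)).2 ∧ (q (i + 2)).2 ≤ (q i).1 := by
  have h0 := (hq.2 (i + 2) (by omega) h).1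
  unfold oWindow at h0
  rw [if_neg (by omega : i + 2 ≠ 1)] at h0
  simp only [Set.mem_setOf_eq] at h0
  exact h0

theorem IsOpConcat.max1 (hq : IsOpConcat R K q) (h : 1 < K) {r : Iv} (hr : r ∈ R)
    (h1 : (q 0).1 < r.2) (h2 : r.2 < (q 0).2) : r.2 ≤ (q 1).2 := by
  refine (hq.2 1 le_rfl h).2 r ?_
  unfold oWindow
  rw [if_pos rfl]
  simp only [Set.mem_setOf_eq]
  exact ⟨hr, h1, h2⟩

theorem IsOpConcat.max (hq : IsOpConcat R K q) {i : ℕ} (h : i + 2 < K) {r : Iv} (hr : r ∈ R)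
    (h1 : (q (i + 1)).1 < r.2) (h2 : r.2 ≤ (q i).1) : r.2 ≤ (q (i + 2)).2 := by
  refine (hq.2 (i + 2) (by omega) h).2 r ?_
  unfold oWindow
  rw [if_neg (by omega : i + 2 ≠ 1)]
  simp only [Set.mem_setOf_eq]
  exact ⟨hr, h1, h2⟩

end AuxLemmas

/-- **Lemma (p=q) / Statement 3.** Let `w = w(p_1, …, p_{n-1}) =
w^{op}(q^1, …, q^{n-1})` be the common support of an `n`-concatenation and its
corresponding `n`-op-concatenation.  If `q^m` has length two for some
`1 < m < n`, then `q^m = p_m` and `q^{m-1} = p_{m-1}`.  (In 0-based indexing,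
`q^j = q (n - 1 - j)` and `p_j = p (j - 1)`.) -/
theorem statement3 (R : Set Iv) (hR : RelSet R) (n m : ℕ) (h1 : 1 < m) (h2 : m < n)
    (p q : ℕ → Iv) (hp : IsConcat R (n - 1) p) (hq : IsOpConcat R (n - 1) q)
    (hs : (q (n - 2)).1 = (p 0).1) (ht : (q 0).2 = (p (n - 2)).2)
    (hlen : (q (n - 1 - m)).2 = (q (n - 1 - m)).1 + 2) :
    q (n - 1 - m) = p (m - 1) ∧ q (n - m) = p (m - 2) := by
  have hm2 : 2 ≤ m := h1
  have hn3 : 3 ≤ n := by omega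
  set K := n - 1 with hKdef
  have hK : 2 ≤ K := by omega
  have hmK : m ≤ K := by omega
  -- chain facts for the concatenation `p`
  have pov : ∀ i, i + 1 < K → (p (i + 1)).1 < (p i).2 := by
    intro i hi
    rcases i with _ | j
    · exact (hp.win1 hi).2.2
    · exact (hp.win (by omega)).2.2
  have pgap : ∀ i, i + 2 < K → (p i).2 ≤ (p (i + 2)).1 := fun i hi => (hp.win hi).2.1
  have pss : ∀ i, i + 1 < K → (p i).1 < (p (i + 1)).1 := by
    intro i hi
    rcases i with _ | j
    · exact (hp.win1 hi).2.1
    · exact lt_of_lt_of_le (pov j (by omega)) (pgap j (by omega))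
  have pes : ∀ i, i + 1 < K → (p i).2 < (p (i + 1)).2 := by
    intro i hi
    by_contra hle
    push_neg at hle
    have heq := hR.nodiv (p i) (hp.rel (by omega)) (p (i + 1)) (hp.rel hi)
      (le_of_lt (pss i hi)) hle
    have hlt := pss i hi
    rw [heq] at hlt
    exact lt_irrefl _ hlt
  -- chain facts for the op-concatenation `q`
  have qov : ∀ i, i + 1 < K → (q i).1 < (q (i + 1)).2 := by
    intro i hi
    rcases i with _ | j
    · exact (hq.win1 hi).2.1
    · exact (hq.win (by omega)).2.1
  have qgap : ∀ i, i + 2 < K → (q (i + 2)).2 ≤ (q i).1 := fun i hi => (hq.win hi).2.2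
  have qes : ∀ i, i + 1 < K → (q (i + 1)).2 < (q i).2 := by
    intro i hi
    rcases i with _ | j
    · exact (hq.win1 hi).2.2
    · exact lt_of_le_of_lt (qgap j (by omega)) (qov j (by omega))
  have qss : ∀ i, i + 1 < K → (q (i + 1)).1 < (q i).1 := by
    intro i hi
    by_contra hle
    push_neg at hle
    have heq := hR.nodiv (q i) (hq.rel (by omega)) (q (i + 1)) (hq.rel hi)
      hle (le_of_lt (qes i hi))
    have hlt := qes i hi
    rw [heq] at hlt
    exact lt_irrefl _ hlt
  -- main comparison: `p_j` sits to the left of `q^j`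
  have main : ∀ i j, i + j = K - 1 →
      (p j).1 ≤ (q i).1 ∧ (p j).2 ≤ (q i).2 ∧
        ∀ j', j = j' + 1 → (q i).1 < (p j').2 := by
    intro i
    induction i using Nat.strong_induction_on with
    | _ i IH =>
      intro j hij
      rcases i with _ | (_ | i)
      · -- base: `q 0 = p (K-1)`
        have htj : (q 0).2 = (p j).2 := by
          have e : n - 2 = j := by omega
          rw [ht, e]
        have hb : q 0 = p j := by
          rcases le_total (q 0).1 (p j).1 with h | h
          · exact hR.nodiv (q 0) (hq.rel (by omega)) (p j) (hp.rel (by omega)) h htj.ge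
          · exact (hR.nodiv (p j) (hp.rel (by omega)) (q 0) (hq.rel (by omega)) h htj.le).symm
        refine ⟨le_of_eq (congrArg Prod.fst hb).symm, le_of_eq (congrArg Prod.snd hb).symm, ?_⟩
        intro j' hj'
        rw [hb, hj']
        exact pov j' (by omega)
      · -- second step: index `1`
        have h1K : 1 < K := by omega
        have IH0 := IH 0 (by omega) (j + 1) (by omega)
        have b30 : (q 0).1 < (p j).2 := IH0.2.2 j rfl
        have htj : (q 0).2 = (p (j + 1)).2 := by
          have e : n - 2 = j + 1 := by omega
          rw [ht, e]
        have hpe : (p j).2 < (q 0).2 := by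
          rw [htj]; exact pes j (by omega)
        have hB2 : (p j).2 ≤ (q 1).2 := hq.max1 h1K (hp.rel (by omega)) b30 hpe
        have hB1 : (p j).1 ≤ (q 1).1 := by
          by_contra hlt
          push_neg at hlt
          have heq := hR.nodiv (q 1) (hq.rel h1K) (p j) (hp.rel (by omega)) hlt.le hB2
          rw [heq] at hlt
          exact lt_irrefl _ hlt
        refine ⟨hB1, hB2, ?_⟩
        intro j' hj'
        subst hj'
        by_contra hcon
        push_neg at hcon
        by_cases hc : (q 1).1 < (p (j' + 1)).2
        · have hmin : (p (j' + 2)).1 ≤ (q 1).1 :=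
            hp.min (i := j') (by omega) (hq.rel h1K) hcon hc
          have hlt : (q 1).2 < (p (j' + 2)).2 := by
            have h := qes 0 h1K
            rw [htj] at h
            exact h
          have heq := hR.nodiv (p (j' + 2)) (hp.rel (by omega)) (q 1) (hq.rel h1K) hmin hlt.le
          rw [← heq] at hlt
          exact lt_irrefl _ hlt
        · push_neg at hc
          have hss : (q 1).1 < (q 0).1 := qss 0 h1K
          omega
      · -- general step: index `i + 2`
        have hi2 : i + 2 < K := by omega
        have IH1 := IH (i + 1) (by omega) (j + 1) (by omega)
        have IH0 := IH i (by omega) (j + 2) (by omega)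
        have b31 : (q (i + 1)).1 < (p j).2 := IH1.2.2 j rfl
        have hgapj : (p j).2 ≤ (q i).1 := le_trans (pgap j (by omega)) IH0.1
        have hB2 : (p j).2 ≤ (q (i + 2)).2 := hq.max hi2 (hp.rel (by omega)) b31 hgapj
        have hB1 : (p j).1 ≤ (q (i + 2)).1 := by
          by_contra hlt
          push_neg at hlt
          have heq := hR.nodiv (q (i + 2)) (hq.rel hi2) (p j) (hp.rel (by omega)) hlt.le hB2
          rw [heq] at hlt
          exact lt_irrefl _ hlt
        refine ⟨hB1, hB2, ?_⟩
        intro j' hj'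
        subst hj'
        by_contra hcon
        push_neg at hcon
        by_cases hc : (q (i + 2)).1 < (p (j' + 1)).2
        · have hmin : (p (j' + 2)).1 ≤ (q (i + 2)).1 :=
            hp.min (i := j') (by omega) (hq.rel hi2) hcon hc
          have hlt : (q (i + 2)).2 < (p (j' + 2)).2 :=
            lt_of_le_of_lt (qgap i hi2) (IH0.2.2 (j' + 2) (by omega))
          have heq := hR.nodiv (p (j' + 2)) (hp.rel (by omega)) (q (i + 2)) (hq.rel hi2)
            hmin hlt.le
          rw [← heq] at hlt
          exact lt_irrefl _ hlt
        · push_neg at hc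
          have hss : (q (i + 2)).1 < (q (i + 1)).1 := qss (i + 1) (by omega)
          omega
  -- conclusion
  have hi0K : K - m < K := by omega
  obtain ⟨b1, b2, b3all⟩ := main (K - m) (m - 1) (by omega)
  have b3 : (q (K - m)).1 < (p (m - 2)).2 := b3all (m - 2) (by omega)
  obtain ⟨c1, c2, -⟩ := main (K - m + 1) (m - 2) (by omega)
  have hpes : (p (m - 2)).2 < (p (m - 1)).2 := by
    have h := pes (m - 2) (by omega)
    have e : m - 2 + 1 = m - 1 := by omega
    rw [e] at h
    exact h
  have hq2 : (q (K - m)).2 = (p (m - 1)).2 := by omega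
  have part1 : q (K - m) = p (m - 1) :=
    (hR.nodiv (p (m - 1)) (hp.rel (by omega)) (q (K - m)) (hq.rel hi0K) b1 hq2.le).symm
  have hup : (q (K - m + 1)).2 ≤ (p (m - 2)).2 := by
    have h := qes (K - m) (by omega)
    omega
  have part2 : q (K - m + 1) = p (m - 2) :=
    (hR.nodiv (p (m - 2)) (hp.rel (by omega)) (q (K - m + 1)) (hq.rel (by omega)) c1 hup).symm
  refine ⟨part1, ?_⟩
  have e : n - m = K - m + 1 := by omega
  rw [e]
  exact part2


end Paper
end
end

section
/- For a triangular string algebra A = kQ/I: if the classes of a pair (ρ, γ) lie in (AP_n // P) (ρ ∈ AP_n, γ ∈ P parallel to ρ), then ρ and γ share at most one common first arrow and at most one common last arrow; i.e., if ρ = α_1…α_s β ρ̄ and γ = α_1…α_s δ γ̄ with β ≠ δ arrows, then s = 1 and α_1 β ∈ I. -/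
/-!
Common framework for formalizing "Hochschild cohomology of triangular string
algebras and its ring structure" (Redondo–Román).

* Interval combinatorics model of Bardzell's `n`-concatenations along a directed
  path (a directed path is modelled by the line `ℕ`, a subpath by an interval,
  and a relation by the interval it occupies).
* A combinatorial model of a bound quiver `(Q, I)` with `I` a monomial ideal
  generated by a reduced set `R` of paths: paths are nonempty composable lists
  of arrows, `AP_n` is the set of supports of `n`-concatenations, `𝒫` is the
  basis of `A = kQ/I` given by the paths not in `I`.
* The Hochschild complex `Hom_{E-E}(kAP_n, A) ≅ k(AP_n ∥ 𝒫)` of a (triangular)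
  monomial algebra obtained from Bardzell's minimal resolution, with its
  differentials `F_n` realized as explicit matrices, and the Hochschild
  cohomology `HH^n(A)` defined as the cohomology of this complex (for monomial
  algebras this complex computes Hochschild cohomology, by Bardzell's theorem).
-/

attribute [local instance] Classical.propDecidable

noncomputable section

namespace Paper

variable (Q : QuivData)

/-! ### The Hochschild complex obtained from Bardzell's resolution -/

variable (k : Type) [Field k]

/-- Auxiliary: an element of `AP_{m+2}` has a prefix which is a relation. -/
lemma mem_relIvs_prefix (Q : QuivData) (R : Set (List Q.E)) (hs : StringData Q R)
    {m : ℕ} {ρ : List Q.E} (h : IsAP Q R (m + 2) ρ) :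
    ∃ t, 2 ≤ t ∧ t ≤ ρ.length ∧ ρ.take t ∈ R := by
  obtain ⟨-, p, hc, h0, -⟩ := h
  obtain ⟨⟨hlt, hle, hmem⟩, -⟩ := hc
  have hsl : slice Q ρ (p 0) = ρ.take (p 0).2 := by
    simp [slice, h0]
  refine ⟨(p 0).2, ?_, hle, by rwa [hsl] at hmem⟩
  have h2 := (hs.relPath _ hmem).2
  rw [hsl] at h2
  simp [List.length_take] at h2
  omega

/-- Auxiliary: an element of `AP_{m+2}` has a suffix which is a relation. -/
lemma mem_relIvs_suffix (Q : QuivData) (R : Set (List Q.E)) (hs : StringData Q R)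
    {m : ℕ} {ρ : List Q.E} (h : IsAP Q R (m + 2) ρ) :
    ∃ u, u + 2 ≤ ρ.length ∧ ρ.drop u ∈ R := by
  obtain ⟨-, p, hc, -, hend⟩ := h
  have hmem : p m ∈ relIvs Q R ρ := by
    rcases Nat.eq_zero_or_pos m with rfl | hm
    · exact hc.1
    · have hw := (hc.2 m hm (Nat.lt_succ_self m)).1
      rw [cWindow] at hw
      split_ifs at hw
      · exact hw.1
      · exact hw.1
  obtain ⟨hlt, hle, hsl⟩ := hmem
  have hds : slice Q ρ (p m) = ρ.drop (p m).1 := by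
    have hlen : (ρ.drop (p m).1).length = ρ.length - (p m).1 := List.length_drop
    rw [slice, hend, ← hlen, List.take_length]
  refine ⟨(p m).1, ?_, by rwa [hds] at hsl⟩
  have h2 := (hs.relPath _ hsl).2
  rw [hds] at h2
  simp [List.length_drop] at h2
  omega

/-- **Remark 4.1(2) / Statement 6.** For a triangular string algebra, a pair
`(ρ, γ) ∈ (AP_n ∥ 𝒫)` has at most one common first arrow and at most one
common last arrow: if `ρ = α_1 ⋯ α_s β ρ̄` and `γ = α_1 ⋯ α_s δ γ̄` with
`β ≠ δ`, then `s = 1` and `α_1 β ∈ I` (and dually for last arrows). -/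
theorem statement6 (Q : QuivData) (R : Set (List Q.E)) (hs : StringData Q R)
    (n : ℕ) (hn : 1 ≤ n) (x : Pr Q) (hx : x ∈ PairSet Q R n) :
    (∀ (pre : List Q.E) (b d : Q.E) (ρ' γ' : List Q.E), pre ≠ [] →
      x.1 = pre ++ b :: ρ' → x.2 = pre ++ d :: γ' → b ≠ d →
      pre.length = 1 ∧ inI Q R (pre ++ [b])) ∧
    (∀ (suf : List Q.E) (b d : Q.E) (ρ' γ' : List Q.E), suf ≠ [] →
      x.1 = ρ' ++ b :: suf → x.2 = γ' ++ d :: suf → b ≠ d →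
      suf.length = 1 ∧ inI Q R (b :: suf)) := by
  obtain ⟨hρ, ⟨hγpath, hγI⟩, -, -⟩ := hx
  constructor
  · rintro pre b d ρ' γ' hpre h1 h2 hbd
    have hprelen : 0 < pre.length := List.length_pos_iff.mpr hpre
    rcases n with _ | _ | m
    · exact hρ.elim
    · exfalso
      have hl := hρ.2
      rw [h1] at hl
      simp [List.length_append] at hl
      omega
    · set a := pre.getLast hpre with ha
      have hpre' : pre.dropLast ++ [a] = pre := List.dropLast_append_getLast hpre
      have hγch : x.2.Chain' fun e f => Q.tgt e = Q.src f := hγpath.2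
      obtain ⟨hρpath, hρsup⟩ := hρ
      have hρch : x.1.Chain' fun e f => Q.tgt e = Q.src f := hρpath.2
      have hlastmem : a ∈ pre.getLast? := by
        rw [List.getLast?_eq_getLast hpre]; rfl
      have htad : Q.tgt a = Q.src d := by
        have hc := (List.isChain_append.mp (h2 ▸ hγch)).2.2
        exact hc a hlastmem d rfl
      have htab : Q.tgt a = Q.src b := by
        have hc := (List.isChain_append.mp (h1 ▸ hρch)).2.2
        exact hc a hlastmem b rfl
      have hnad : [a, d] ∉ R := by
        intro hR
        exact hγI ⟨[a, d], hR, ⟨pre.dropLast, γ', by rw [h2, ← hpre']; simp⟩⟩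
      have hab : [a, b] ∈ R := by
        by_contra hnab
        exact hbd (hs.uniqRight a b d htab htad hnab hnad)
      obtain ⟨t, ht2, htle, htR⟩ := mem_relIvs_prefix Q R hs ⟨hρpath, hρsup⟩
      have htgt : pre.length < t := by
        by_contra hle'
        push_neg at hle'
        apply hγI
        refine ⟨x.1.take t, htR, ?_⟩
        have e1 : x.1.take t = pre.take t := by
          rw [h1, List.take_append, Nat.sub_eq_zero_of_le hle']
          simp
        rw [e1]
        exact ((List.take_prefix t pre).trans (by rw [h2]; exact ⟨d :: γ', rfl⟩)).isInfix
      have e3 : x.1.take t = pre.dropLast ++ [a, b] ++ ρ'.take (t - pre.length - 1) := by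
        rw [h1, List.take_append, List.take_of_length_le (le_of_lt htgt),
          show t - pre.length = (t - pre.length - 1) + 1 by omega, List.take_succ_cons, ← hpre']
        simp
      have heq : [a, b] = x.1.take t :=
        hs.relMin _ htR _ hab ⟨pre.dropLast, ρ'.take (t - pre.length - 1), by rw [e3]⟩
      have hlen : pre.dropLast.length + 2 + (ρ'.take (t - pre.length - 1)).length = 2 := by
        have hl := congrArg List.length heq
        rw [e3] at hl
        simp only [List.length_append, List.length_cons, List.length_nil] at hl
        omega
      have hd0 : pre.dropLast = [] := List.eq_nil_of_length_eq_zero (by omega)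
      have hpa : pre = [a] := by rw [← hpre', hd0]; simp
      refine ⟨by rw [hpa]; rfl, ⟨[a, b], hab, ?_⟩⟩
      rw [hpa]
      exact List.infix_refl _
  · rintro suf b d ρ' γ' hsuf h1 h2 hbd
    have hsuflen : 0 < suf.length := List.length_pos_iff.mpr hsuf
    rcases n with _ | _ | m
    · exact hρ.elim
    · exfalso
      have hl := hρ.2
      rw [h1] at hl
      simp [List.length_append] at hl
      omega
    · set α := suf.head hsuf with hα
      have hsuf' : α :: suf.tail = suf := List.cons_head_tail hsuf
      have hγch : x.2.Chain' fun e f => Q.tgt e = Q.src f := hγpath.2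
      obtain ⟨hρpath, hρsup⟩ := hρ
      have hρch : x.1.Chain' fun e f => Q.tgt e = Q.src f := hρpath.2
      have hheadmem : α ∈ suf.head? := by
        rw [List.head?_eq_head hsuf]; rfl
      have htbα : Q.tgt b = Q.src α := by
        have hc := (List.isChain_append.mp (h1 ▸ hρch)).2.1
        exact (List.isChain_cons.mp hc).1 α hheadmem
      have htdα : Q.tgt d = Q.src α := by
        have hc := (List.isChain_append.mp (h2 ▸ hγch)).2.1
        exact (List.isChain_cons.mp hc).1 α hheadmem
      have hndα : [d, α] ∉ R := by
        intro hR
        exact hγI ⟨[d, α], hR, ⟨γ', suf.tail, by rw [h2, ← hsuf']; simp⟩⟩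
      have hbα : [b, α] ∈ R := by
        by_contra hnbα
        exact hbd (hs.uniqLeft α b d htbα htdα hnbα hndα)
      obtain ⟨u, hu2, huR⟩ := mem_relIvs_suffix Q R hs ⟨hρpath, hρsup⟩
      have hule : u ≤ ρ'.length := by
        by_contra hgt
        push_neg at hgt
        apply hγI
        refine ⟨x.1.drop u, huR, ?_⟩
        have e1 : x.1.drop u = suf.drop (u - ρ'.length - 1) := by
          rw [h1, List.drop_append, List.drop_of_length_le (le_of_lt hgt),
            show u - ρ'.length = (u - ρ'.length - 1) + 1 by omega, List.drop_succ_cons]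
          simp
        rw [e1]
        refine ((List.drop_suffix _ _).trans ?_).isInfix
        rw [h2]
        exact ⟨γ' ++ [d], by simp⟩
      have e3 : x.1.drop u = ρ'.drop u ++ [b, α] ++ suf.tail := by
        rw [h1, List.drop_append, Nat.sub_eq_zero_of_le hule, List.drop_zero,
          ← hsuf']
        simp
      have heq : [b, α] = x.1.drop u :=
        hs.relMin _ huR _ hbα ⟨ρ'.drop u, suf.tail, by rw [e3]⟩
      have hlen : (ρ'.drop u).length + 2 + suf.tail.length = 2 := by
        have hl := congrArg List.length heq
        rw [e3] at hl
        simp only [List.length_append, List.length_cons, List.length_nil] at hl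
        omega
      have ht0 : suf.tail = [] := List.eq_nil_of_length_eq_zero (by omega)
      have hsa : suf = [α] := by rw [← hsuf', ht0]
      refine ⟨by rw [hsa]; rfl, ⟨[b, α], hbα, ?_⟩⟩
      rw [hsa]


end Paper
end
end

section
/- For a triangular string algebra A = kQ/I, the set (1,1)_2 is empty: no relation ρ = α_1 α_2 ∈ R admits a parallel path γ ∈ P with γ ∈ α_1 · kQ · α_2. Consequently (R // P) decomposes as the disjoint union of (0,0)_2, (1,0)_2 and (0,1)_2. -/
/-!
Common framework for formalizing "Hochschild cohomology of triangular string
algebras and its ring structure" (Redondo–Román).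

* Interval combinatorics model of Bardzell's `n`-concatenations along a directed
  path (a directed path is modelled by the line `ℕ`, a subpath by an interval,
  and a relation by the interval it occupies).
* A combinatorial model of a bound quiver `(Q, I)` with `I` a monomial ideal
  generated by a reduced set `R` of paths: paths are nonempty composable lists
  of arrows, `AP_n` is the set of supports of `n`-concatenations, `𝒫` is the
  basis of `A = kQ/I` given by the paths not in `I`.
* The Hochschild complex `Hom_{E-E}(kAP_n, A) ≅ k(AP_n ∥ 𝒫)` of a (triangular)
  monomial algebra obtained from Bardzell's minimal resolution, with its
  differentials `F_n` realized as explicit matrices, and the Hochschild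
  cohomology `HH^n(A)` defined as the cohomology of this complex (for monomial
  algebras this complex computes Hochschild cohomology, by Bardzell's theorem).
-/

attribute [local instance] Classical.propDecidable

noncomputable section

namespace Paper

variable (Q : QuivData)

/-! ### The Hochschild complex obtained from Bardzell's resolution -/

variable (k : Type) [Field k]

section Statement7Aux

variable {Q : QuivData} {R : Set (List Q.E)}

/-- A member of `AP_2` is a relation. -/
lemma ap2_mem_R {ρ : List Q.E} (hρ : IsAP Q R 2 ρ) : ρ ∈ R := by
  obtain ⟨hp, p, hc, h1, h2⟩ := hρ
  obtain ⟨hlt, hle, hmem⟩ := hc.1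
  simpa [slice, h1, h2] using hmem

/-- Two composable-pair-free paths with the same first arrow are comparable
by the prefix order. -/
lemma prefix_dichotomy (hs : StringData Q R) :
    ∀ l₁ l₂ : List Q.E, l₁.Chain' (fun a b => Q.tgt a = Q.src b) →
      l₂.Chain' (fun a b => Q.tgt a = Q.src b) →
      (∀ a b : Q.E, [a, b] <:+: l₁ → [a, b] ∉ R) →
      (∀ a b : Q.E, [a, b] <:+: l₂ → [a, b] ∉ R) →
      l₁.head? = l₂.head? → l₁ <+: l₂ ∨ l₂ <+: l₁ := by
  intro l₁
  induction l₁ with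
  | nil => intro l₂ _ _ _ _ _; exact Or.inl List.nil_prefix
  | cons a t₁ ih =>
    intro l₂ h₁ h₂ hn₁ hn₂ hh
    cases l₂ with
    | nil => exact Or.inr List.nil_prefix
    | cons a' t₂ =>
      simp only [List.head?_cons, Option.some.injEq] at hh
      subst hh
      cases t₁ with
      | nil => exact Or.inl ⟨t₂, rfl⟩
      | cons b t₁' =>
        cases t₂ with
        | nil => exact Or.inr ⟨b :: t₁', rfl⟩
        | cons c t₂' =>
          have hab : Q.tgt a = Q.src b := (List.isChain_cons_cons.mp h₁).1
          have hac : Q.tgt a = Q.src c := (List.isChain_cons_cons.mp h₂).1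
          have hbc : b = c := hs.uniqRight a b c hab hac
            (hn₁ a b ⟨[], t₁', rfl⟩) (hn₂ a c ⟨[], t₂', rfl⟩)
          subst hbc
          have := ih (b :: t₂') (List.isChain_cons_cons.mp h₁).2 (List.isChain_cons_cons.mp h₂).2
            (fun x y hin => hn₁ x y (List.infix_cons hin))
            (fun x y hin => hn₂ x y (List.infix_cons hin)) rfl
          rcases this with h | h
          · exact Or.inl (List.cons_prefix_cons.mpr ⟨rfl, h⟩)
          · exact Or.inr (List.cons_prefix_cons.mpr ⟨rfl, h⟩)

/-- A proper extension of a path cannot have the same target (no oriented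
cycles). -/
lemma cycle_contra (hs : StringData Q R) {l s : List Q.E}
    (hl : l ≠ []) (hsn : s ≠ [])
    (hch : (l ++ s).Chain' (fun a b => Q.tgt a = Q.src b))
    (ht : ptgt Q (l ++ s) = ptgt Q l) : False := by
  rw [List.Chain', List.isChain_append] at hch
  obtain ⟨hcl, hcs, hj⟩ := hch
  apply hs.triangular s ⟨hsn, hcs⟩
  have hjunc : Q.tgt (l.getLast hl) = Q.src (s.head hsn) := by
    apply hj
    · rw [List.getLast?_eq_getLast hl]; rfl
    · rw [List.head?_eq_head hsn]; rfl
  have h1 : psrc Q s = ptgt Q l := by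
    simp [psrc, ptgt, List.head?_eq_head hsn, List.getLast?_eq_getLast hl, ← hjunc]
  rw [h1, ← ht]
  simp [ptgt, List.getLast?_append_of_ne_nil _ hsn]

end Statement7Aux

/-- **Remark 4.1(4) / Statement 7.** For a triangular string algebra,
`(1,1)_2 = ∅`: no relation `ρ = α_1 α_2 ∈ R` admits a parallel basis path `γ`
starting with `α_1` and ending with `α_2`.  Consequently `(AP_2 ∥ 𝒫) =
(ℛ ∥ 𝒫)` is the (disjoint) union of `(0,0)_2`, `(1,0)_2` and `(0,1)_2`. -/
theorem statement7 (Q : QuivData) (R : Set (List Q.E)) (hs : StringData Q R) :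
    cls11 Q R 2 = ∅ ∧
    PairSet Q R 2 = cls00 Q R 2 ∪ cls10 Q R 2 ∪ cls01 Q R 2 := by
  have hempty : cls11 Q R 2 = ∅ := by
    ext x
    simp only [Set.mem_empty_iff_false, iff_false]
    rintro ⟨⟨hAP, hγP, hsrc, htgt⟩, hf, hl⟩
    obtain ⟨ρ, γ⟩ := x
    dsimp only at *
    have hρR : ρ ∈ R := ap2_mem_R hAP
    have pathρ : IsPathL Q ρ := hAP.1
    obtain ⟨pathγ, hγI⟩ := hγP
    by_cases hlen : ρ.length = 2
    · -- ρ = [α₁, α₂]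
      obtain ⟨α₁, α₂, rfl⟩ := List.length_eq_two.mp hlen
      have hcomp : Q.tgt α₁ = Q.src α₂ := (List.isChain_cons_cons.mp pathρ.2).1
      obtain ⟨c, t, rfl⟩ := List.exists_cons_of_ne_nil pathγ.1
      have hc : α₁ = c := by
        simpa [sharesFirst] using hf
      subst hc
      cases t with
      | nil =>
        have hα : α₂ = α₁ := by
          simpa [sharesLast] using hl
        apply hs.triangular [α₁] pathγ
        simp [psrc, ptgt, hcomp, hα]
      | cons d t' =>
        have htne : (d :: t') ≠ [] := by simp
        have hlast : (d :: t').getLast htne = α₂ := by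
          have : (α₁ :: d :: t').getLast? = some α₂ := hl.symm
          rw [List.getLast?_cons_cons, List.getLast?_eq_getLast htne] at this
          simpa using this
        have hdecomp : d :: t' = (d :: t').dropLast ++ [α₂] := by
          conv_lhs => rw [← List.dropLast_append_getLast htne]
          rw [hlast]
        cases hmid : (d :: t').dropLast with
        | nil =>
          rw [hmid] at hdecomp
          simp only [List.nil_append] at hdecomp
          exact hγI ⟨[α₁, α₂], hρR, by rw [hdecomp]⟩
        | cons m ms =>
          rw [hmid] at hdecomp
          have hmidne : (m :: ms : List Q.E) ≠ [] := by simp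
          have hγeq : α₁ :: d :: t' = (α₁ :: (m :: ms)) ++ [α₂] := by
            rw [hdecomp]; rfl
          have hch := pathγ.2
          rw [hγeq, List.Chain', List.isChain_append] at hch
          obtain ⟨hch1, _, hj⟩ := hch
          have hch2 := List.isChain_cons_cons.mp hch1
          have hhead : Q.tgt α₁ = Q.src m := hch2.1
          have hlastmid : Q.tgt ((m :: ms).getLast hmidne) = Q.src α₂ := by
            apply hj
            · rw [List.getLast?_cons_cons, List.getLast?_eq_getLast hmidne]
              rfl
            · rfl
          apply hs.triangular (m :: ms) ⟨hmidne, hch2.2⟩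
          have h1 : psrc Q (m :: ms) = some (Q.tgt α₁) := by simp [psrc, ← hhead]
          have h2 : ptgt Q (m :: ms) = some (Q.tgt α₁) := by
            simp [ptgt, List.getLast?_eq_getLast hmidne, hlastmid, hcomp]
          rw [h1, h2]
    · -- all length-2 subwords of ρ are outside R
      have hnρ : ∀ a b : Q.E, [a, b] <:+: ρ → [a, b] ∉ R := by
        intro a b hin hR
        exact hlen (by rw [← hs.relMin ρ hρR [a, b] hR hin]; rfl)
      have hnγ : ∀ a b : Q.E, [a, b] <:+: γ → [a, b] ∉ R := by
        intro a b hin hR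
        exact hγI ⟨[a, b], hR, hin⟩
      rcases prefix_dichotomy hs ρ γ pathρ.2 pathγ.2 hnρ hnγ hf with ⟨s, rfl⟩ | ⟨s, rfl⟩
      · cases s with
        | nil => exact hγI ⟨ρ, hρR, by simp⟩
        | cons e s' =>
          exact cycle_contra hs pathρ.1 (by simp) pathγ.2 htgt.symm
      · cases s with
        | nil => exact hγI ⟨γ ++ [], hρR, by simp⟩
        | cons e s' =>
          exact cycle_contra hs pathγ.1 (by simp) pathρ.2 htgt
  refine ⟨hempty, ?_⟩
  ext x
  simp only [Set.mem_union]
  constructor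
  · intro hx
    by_cases h1 : sharesFirst Q x <;> by_cases h2 : sharesLast Q x
    · exact absurd (show x ∈ cls11 Q R 2 from ⟨hx, h1, h2⟩) (by simp [hempty])
    · exact Or.inl (Or.inr ⟨hx, h1, h2⟩)
    · exact Or.inr ⟨hx, h1, h2⟩
    · exact Or.inl (Or.inl ⟨hx, h1, h2⟩)
  · rintro ((⟨h, -⟩ | ⟨h, -⟩) | ⟨h, -⟩) <;> exact h


end Paper
end
end
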